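/- Let G : (−∞, a) → ℝ be twice continuously differentiable and satisfy G(a−) = 0 and the integro-differential equation (σ²/2)G''(x) + (α + βx)G'(x) + λ∫_x^a G(y) η e^{−η(y−x)} dy − (λ+q)G(x) + λ e^{−η(a−x)} = 0 for all x < a. Then G is three times differentiable and satisfies the third-order ODE (σ²/2)G'''(x) + (α + βx − ησ²/2)G''(x) + (β − η(α+βx) − λ − q)G'(x) + ηq G(x) = 0 for all x < a. -/

import Mathlib

open Filter Set Topology Real intervalIntegral

/-- (Lemma 4.4, differentiation direction.) If `G` is `C²` on
`(−∞, a)`, vanishes at `a⁻`, and satisfies the integro-differential equation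
`(σ²/2)G'' + (α+βx)G' + λ∫ₓᵃ G(y) η e^{−η(y−x)} dy − (λ+q)G + λ e^{−η(a−x)} = 0`
on `(−∞, a)`, then `G` is three times differentiable there and satisfies the
third-order ODE
`(σ²/2)G''' + (α+βx−ησ²/2)G'' + (β−η(α+βx)−λ−q)G' + ηq G = 0`. -/
theorem stmt16 (σ α β lam η q a : ℝ)
    (hσ : 0 < σ) (hlam : 0 < lam) (hη : 0 < η) (hq : 0 ≤ q)
    (G G' G'' : ℝ → ℝ)
    (hG : ∀ x < a, HasDerivAt G (G' x) x)
    (hG' : ∀ x < a, HasDerivAt G' (G'' x) x)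
    (hG''c : ContinuousOn G'' (Set.Iio a))
    (hbd : Tendsto G (nhdsWithin a (Set.Iio a)) (nhds 0))
    (heq : ∀ x < a,
      σ ^ 2 / 2 * G'' x + (α + β * x) * G' x
        + lam * (∫ y in x..a, G y * (η * Real.exp (-(η * (y - x)))))
        - (lam + q) * G x + lam * Real.exp (-(η * (a - x))) = 0) :
    ∃ G''' : ℝ → ℝ, (∀ x < a, HasDerivAt G'' (G''' x) x) ∧
      ∀ x < a,
        σ ^ 2 / 2 * G''' x + (α + β * x - η * σ ^ 2 / 2) * G'' x
          + (β - η * (α + β * x) - lam - q) * G' x + η * q * G x = 0 := by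
  have hσ2 : (σ : ℝ) ^ 2 ≠ 0 := by positivity
  -- extension of G by 0 to [a, ∞)
  set g : ℝ → ℝ := fun y => if y < a then G y else 0 with hgdef
  have hg_eq : ∀ y < a, g y = G y := fun y hy => if_pos hy
  have hg_eq0 : ∀ y, a ≤ y → g y = 0 := fun y hy => if_neg (not_lt.mpr hy)
  have hgcont : Continuous g := by
    rw [continuous_iff_continuousAt]
    intro y
    rcases lt_trichotomy y a with hy | rfl | hy
    · refine ((hG y hy).continuousAt).congr ?_
      filter_upwards [Iio_mem_nhds hy] with z hz using (hg_eq z hz).symm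
    · have h0 : g y = 0 := hg_eq0 y le_rfl
      rw [ContinuousAt, h0, ← nhdsLT_sup_nhdsGE y, tendsto_sup]
      constructor
      · refine Tendsto.congr' ?_ hbd
        filter_upwards [self_mem_nhdsWithin] with z hz using (hg_eq z hz).symm
      · refine tendsto_const_nhds.congr' ?_
        filter_upwards [self_mem_nhdsWithin] with z hz using (hg_eq0 z hz).symm
    · have : ∀ᶠ z in 𝓝 y, g z = 0 := by
        filter_upwards [Ioi_mem_nhds hy] with z hz using hg_eq0 z hz.le
      have h0 : g y = 0 := hg_eq0 y hy.le
      have h1 : g =ᶠ[𝓝 y] fun _ => (0 : ℝ) := this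
      exact h1.continuousAt.congr (by simpa using h1.symm)
  set f : ℝ → ℝ := fun y => g y * Real.exp (-(η * y)) with hfdef
  have hfcont : Continuous f := hgcont.mul (by continuity)
  set J : ℝ → ℝ := fun x => ∫ t in x..a, f t with hJdef
  have hJderiv : ∀ x : ℝ, HasDerivAt J (-(f x)) x := fun x =>
    intervalIntegral.integral_hasDerivAt_left (hfcont.intervalIntegrable x a)
      (hfcont.stronglyMeasurableAtFilter MeasureTheory.volume (𝓝 x)) hfcont.continuousAt
  set K : ℝ → ℝ := fun x => η * Real.exp (η * x) * J x with hKdef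
  have hKderiv : ∀ x : ℝ, HasDerivAt K (η * K x - η * g x) x := by
    intro x
    have he : HasDerivAt (fun x : ℝ => Real.exp (η * x)) (Real.exp (η * x) * (η * 1)) x :=
      ((hasDerivAt_id x).const_mul η).exp
    have h : HasDerivAt K _ x := (he.const_mul η).mul (hJderiv x)
    have hexp : Real.exp (η * x) * Real.exp (-(η * x)) = 1 := by
      rw [← Real.exp_add]; simp
    convert h using 1
    simp only [hKdef, hfdef]
    linear_combination (η * g x) * hexp
  -- the integral in the equation equals K
  have hint : ∀ x < a,
      (∫ y in x..a, G y * (η * Real.exp (-(η * (y - x))))) = K x := by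
    intro x hx
    have h1 : K x = ∫ y in x..a, η * Real.exp (η * x) * f y := by
      rw [intervalIntegral.integral_const_mul]
    rw [h1, intervalIntegral.integral_of_le hx.le, intervalIntegral.integral_of_le hx.le,
      MeasureTheory.integral_Ioc_eq_integral_Ioo, MeasureTheory.integral_Ioc_eq_integral_Ioo]
    apply MeasureTheory.setIntegral_congr_fun measurableSet_Ioo
    intro y hy
    have hy' : y < a := hy.2
    simp only [hfdef, hg_eq y hy']
    have : Real.exp (-(η * (y - x))) = Real.exp (η * x) * Real.exp (-(η * y)) := by
      rw [← Real.exp_add]; ring_nf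
    rw [this]; ring
  -- the equation with K
  have heqK : ∀ x < a, lam * K x =
      (lam + q) * G x - σ ^ 2 / 2 * G'' x - (α + β * x) * G' x
        - lam * Real.exp (-(η * (a - x))) := by
    intro x hx
    have := heq x hx
    rw [hint x hx] at this
    linarith
  set inner : ℝ → ℝ := fun x =>
    (lam + q) * G x - (α + β * x) * G' x - lam * K x
      - lam * Real.exp (-(η * (a - x))) with hinnerdef
  set inner' : ℝ → ℝ := fun x =>
    (lam + q) * G' x - (β * G' x + (α + β * x) * G'' x) - lam * (η * K x - η * g x)
      - lam * (Real.exp (-(η * (a - x))) * η) with hinner'def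
  have hEd : ∀ x : ℝ, HasDerivAt (fun x => Real.exp (-(η * (a - x))))
      (Real.exp (-(η * (a - x))) * η) x := by
    intro x
    have h0 : HasDerivAt (fun x : ℝ => η * x - η * a) (η * 1) x :=
      ((hasDerivAt_id x).const_mul η).sub_const _
    have key := h0.exp
    have hfun : (fun x : ℝ => Real.exp (-(η * (a - x)))) =
        fun x : ℝ => Real.exp (η * x - η * a) := by
      funext z; congr 1; ring
    rw [hfun]
    convert key using 1
    have harg : -(η * (a - x)) = η * x - η * a := by ring
    rw [harg]; ring
  have hinner_deriv : ∀ x < a, HasDerivAt inner (inner' x) x := by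
    intro x hx
    have haβ : HasDerivAt (fun x : ℝ => α + β * x) β x := by
      simpa using ((hasDerivAt_id x).const_mul β).const_add α
    have h1 := (((hG x hx).const_mul (lam + q)).sub (haβ.mul (hG' x hx))).sub
      ((hKderiv x).const_mul lam) |>.sub ((hEd x).const_mul lam)
    exact h1
  have hrel : ∀ x < a, inner x = σ ^ 2 / 2 * G'' x := by
    intro x hx
    have := heqK x hx
    simp only [hinnerdef]
    linarith
  -- G'' equals (2/σ²) inner near each point of Iio a
  set H : ℝ → ℝ := fun x => 2 / σ ^ 2 * inner x with hHdef
  have hHG : ∀ x < a, G'' x = H x := by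
    intro x hx
    simp only [hHdef]
    rw [hrel x hx]
    field_simp
  refine ⟨fun x => 2 / σ ^ 2 * inner' x, ?_, ?_⟩
  · intro x hx
    have h1 : HasDerivAt H (2 / σ ^ 2 * inner' x) x := (hinner_deriv x hx).const_mul _
    refine h1.congr_of_eventuallyEq ?_
    filter_upwards [Iio_mem_nhds hx] with z hz using hHG z hz
  · intro x hx
    -- identify σ²/2 * G''' x with inner' x by uniqueness of derivatives
    have hGd : HasDerivAt G'' (2 / σ ^ 2 * inner' x) x := by
      have h1 : HasDerivAt H (2 / σ ^ 2 * inner' x) x := (hinner_deriv x hx).const_mul _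
      refine h1.congr_of_eventuallyEq ?_
      filter_upwards [Iio_mem_nhds hx] with z hz using hHG z hz
    have h2 : HasDerivAt inner (σ ^ 2 / 2 * (2 / σ ^ 2 * inner' x)) x := by
      refine (hGd.const_mul (σ ^ 2 / 2)).congr_of_eventuallyEq ?_
      filter_upwards [Iio_mem_nhds hx] with z hz using hrel z hz
    have hu : σ ^ 2 / 2 * (2 / σ ^ 2 * inner' x) = inner' x :=
      h2.unique (hinner_deriv x hx)
    rw [hu]
    have hK := heqK x hx
    simp only [hinner'def, hg_eq x hx]
    linear_combination (-η) * hK
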